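/- If C² > 2·U(0) = GM²(Mγ₀ + 8mγ), then the triple collision manifold 𝒞 = {(v,θ,w) ∈ ℝ × [−π/2, π/2] × ℝ : w² + v²·cos⁴θ/U(θ) + (C² − 2U(θ))·cos²θ/U(θ) = 0} consists exactly of the two lines {(v, π/2, 0) : v ∈ ℝ} ∪ {(v, −π/2, 0) : v ∈ ℝ}. -/

import Mathlib

open Real

theorem stmt_8 (G M m γ₀ γ μ C : ℝ) (hG : 0 < G) (hM : 0 < M) (hm : 0 < m)
    (hγ₀ : 0 < γ₀) (hγ : 0 < γ) (hμ : μ = (2*M + m)/m) (U : ℝ → ℝ)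
    (hU : ∀ θ, U θ = G*M*(M/2) *
      (M*γ₀ + 8*m*γ * Real.cos θ^2 / (Real.cos θ^2 + μ * Real.sin θ^2)))
    (hC : C^2 > G*M^2*(M*γ₀ + 8*m*γ)) :
    {p : ℝ × ℝ × ℝ | p.2.1 ∈ Set.Icc (-(Real.pi/2)) (Real.pi/2) ∧
      p.2.2^2 + p.1^2 * Real.cos p.2.1^4 / U p.2.1
        + (C^2 - 2*U p.2.1) * Real.cos p.2.1^2 / U p.2.1 = 0}
    = {p : ℝ × ℝ × ℝ | ∃ v : ℝ, p = (v, Real.pi/2, 0)} ∪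
      {p : ℝ × ℝ × ℝ | ∃ v : ℝ, p = (v, -(Real.pi/2), 0)} := by
  have hμ1 : 1 ≤ μ := by
    rw [hμ]; rw [le_div_iff₀ hm]; nlinarith
  have key : ∀ θ : ℝ, 0 < U θ ∧ 2 * U θ ≤ G*M^2*(M*γ₀ + 8*m*γ) := by
    intro θ
    have hsc := Real.sin_sq_add_cos_sq θ
    have hD : (1:ℝ) ≤ Real.cos θ^2 + μ * Real.sin θ^2 := by nlinarith [sq_nonneg (Real.sin θ)]
    have hD0 : (0:ℝ) < Real.cos θ^2 + μ * Real.sin θ^2 := by linarith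
    have hfrac0 : 0 ≤ 8*m*γ * Real.cos θ^2 / (Real.cos θ^2 + μ * Real.sin θ^2) := by
      apply div_nonneg _ hD0.le; positivity
    have hfrac1 : 8*m*γ * Real.cos θ^2 / (Real.cos θ^2 + μ * Real.sin θ^2) ≤ 8*m*γ := by
      rw [div_le_iff₀ hD0]
      nlinarith [mul_nonneg (mul_nonneg hm.le hγ.le)
        (mul_nonneg (by linarith : (0:ℝ) ≤ μ) (sq_nonneg (Real.sin θ)))]
    constructor
    · rw [hU]; have : 0 < M*γ₀ + 8*m*γ * Real.cos θ^2 / (Real.cos θ^2 + μ * Real.sin θ^2) := by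
        nlinarith
      positivity
    · rw [hU]
      nlinarith [mul_le_mul_of_nonneg_left hfrac1 (by positivity : (0:ℝ) ≤ G*M^2),
        mul_nonneg (by positivity : (0:ℝ) ≤ G*M^2) hfrac0]
  ext ⟨v, θ, w⟩
  simp only [Set.mem_setOf_eq, Set.mem_union, Set.mem_Icc, Prod.mk.injEq]
  constructor
  · rintro ⟨⟨h1, h2⟩, heq⟩
    obtain ⟨hU0, hUle⟩ := key θ
    have hpos : 0 < C^2 - 2*U θ := by linarith
    have t1 : 0 ≤ w^2 := sq_nonneg w
    have t2 : 0 ≤ v^2 * Real.cos θ^4 / U θ := by positivity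
    have t3 : 0 ≤ (C^2 - 2*U θ) * Real.cos θ^2 / U θ := by positivity
    have hc0 : Real.cos θ = 0 := by
      have : (C^2 - 2*U θ) * Real.cos θ^2 / U θ = 0 := by linarith
      have h2' : (C^2 - 2*U θ) * Real.cos θ^2 = 0 := by
        field_simp at this; simpa using this
      have := mul_eq_zero.mp h2'
      rcases this with h | h
      · linarith
      · exact pow_eq_zero_iff (by norm_num) |>.mp h
    have hw : w = 0 := by
      have : w^2 = 0 := by
        rw [hc0] at heq; ring_nf at heq ⊢; linarith [heq]
      exact pow_eq_zero_iff (by norm_num) |>.mp this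
    obtain ⟨n, hn⟩ := Real.cos_eq_zero_iff.mp hc0
    have hpi := Real.pi_pos
    have ha : (-1:ℤ) ≤ 2*n+1 := by
      have : (-1:ℝ) ≤ 2*(n:ℝ)+1 := by nlinarith
      exact_mod_cast this
    have hb : (2*n+1 : ℤ) ≤ 1 := by
      have : (2*(n:ℝ)+1) ≤ 1 := by nlinarith
      exact_mod_cast this
    have hn01 : n = 0 ∨ n = -1 := by omega
    rcases hn01 with rfl | rfl
    · left; exact ⟨v, rfl, by rw [hn]; push_cast; ring, hw⟩
    · right; exact ⟨v, rfl, by rw [hn]; push_cast; ring, hw⟩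
  · have hpi := Real.pi_pos
    rintro (⟨v', hv, hθ, hw⟩ | ⟨v', hv, hθ, hw⟩) <;> subst hθ <;> subst hw <;>
      refine ⟨⟨by linarith, by linarith⟩, ?_⟩ <;>
      simp [Real.cos_pi_div_two]
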